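/- For every finite simple graph G = (V, E) and every positive integer d, the number of parity-closed walks of length d in G satisfies 2^{|E|} · P_d = Σ_{π} trace((A_π)^d), where the sum runs over all 2^{|E|} sign functions π on G. Equivalently, P_d is the arithmetic mean of the d-th spectral moments of all signed graphs with underlying graph G. -/

import Mathlib

open Matrix SimpleGraph Finset

/-- The signed adjacency matrix of a graph `G` with sign function `π` on its edge set. -/
noncomputable def signedAdj {V : Type*} [Fintype V] [DecidableEq V] (G : SimpleGraph V)
    [DecidableRel G.Adj] (π : G.edgeSet → ℤˣ) : Matrix V V ℝ :=
  Matrix.of fun u v =>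
    if h : G.Adj u v then ((π ⟨s(u, v), (G.mem_edgeSet).mpr h⟩ : ℤ) : ℝ) else 0

/-- The number of parity-closed walks of length `d` in `G`: closed walks (with a distinguished
starting vertex) of length `d` that traverse each edge of `G` an even number of times. -/
noncomputable def parityClosedWalkCount {V : Type*} [Fintype V] [DecidableEq V]
    (G : SimpleGraph V) (d : ℕ) : ℕ :=
  ∑ v : V, Nat.card {p : G.Walk v v // p.length = d ∧
      ∀ e ∈ G.edgeSet, Even (p.edges.count e)}

section aux

variable {V : Type*} [Fintype V] [DecidableEq V] (G : SimpleGraph V) [DecidableRel G.Adj]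

/-- The weight of a walk: the product of the signs of its edges (with multiplicity). -/
noncomputable def wt (π : G.edgeSet → ℤˣ) {u v : V} (p : G.Walk u v) : ℝ :=
  (p.edges.map (fun e => if h : e ∈ G.edgeSet then ((π ⟨e, h⟩ : ℤ) : ℝ) else 1)).prod

lemma wt_cons (π : G.edgeSet → ℤˣ) {u x v : V} (h : G.Adj u x) (p : G.Walk x v) :
    wt G π (Walk.cons h p) = signedAdj G π u x * wt G π p := by
  rw [wt, Walk.edges_cons, List.map_cons, List.prod_cons]
  congr 1
  rw [dif_pos (G.mem_edgeSet.mpr h)]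
  simp [signedAdj, h]

lemma signedAdj_pow_apply (π : G.edgeSet → ℤˣ) (d : ℕ) (u v : V) :
    (signedAdj G π ^ d) u v = ∑ p ∈ G.finsetWalkLength d u v, wt G π p := by
  induction d generalizing u with
  | zero =>
    obtain rfl | h := eq_or_ne u v
    · simp [finsetWalkLength, wt]
    · simp [finsetWalkLength, h, Matrix.one_apply_ne h]
  | succ n ih =>
    rw [pow_succ', Matrix.mul_apply]
    simp only [ih]
    rw [show G.finsetWalkLength (n+1) u v = Finset.univ.biUnion fun (w : G.neighborSet u) =>
      (G.finsetWalkLength n w v).map ⟨fun p => Walk.cons w.property p, fun _ _ h => by cases h; rfl⟩ from rfl]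
    rw [Finset.sum_biUnion ?disj]
    case disj =>
      rintro ⟨x, hx⟩ - ⟨y, hy⟩ - hxy
      simp only [Function.onFun]
      rw [Finset.disjoint_left]
      intro p h1 h2
      simp only [Finset.mem_map, Function.Embedding.coeFn_mk] at h1 h2
      obtain ⟨px, _, rfl⟩ := h1
      obtain ⟨py, _, hp2⟩ := h2
      cases hp2
      simp at hxy
    have key : ∀ x : ↑(G.neighborSet u), (∑ q ∈ (G.finsetWalkLength n (x : V) v).map
        ⟨fun p => Walk.cons x.property p, fun _ _ h => by cases h; rfl⟩, wt G π q)
        = signedAdj G π u x * ∑ p ∈ G.finsetWalkLength n (x : V) v, wt G π p := by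
      intro x
      rw [Finset.sum_map, Finset.mul_sum]
      exact Finset.sum_congr rfl fun p _ => wt_cons G π x.property p
    rw [Finset.sum_congr rfl fun x _ => key x]
    rw [Finset.sum_set_coe (f := fun x => signedAdj G π u x * ∑ p ∈ G.finsetWalkLength n x v, wt G π p)]
    rw [← neighborFinset_def]
    refine (Finset.sum_subset (Finset.subset_univ _) ?_).symm
    intro x _ hx
    rw [mem_neighborFinset] at hx
    simp [signedAdj, hx]

lemma wt_eq_prod (π : G.edgeSet → ℤˣ) {u v : V} (p : G.Walk u v) :
    wt G π p = ∏ e : G.edgeSet, ((π e : ℤ) : ℝ) ^ (p.edges.count (e : Sym2 V)) := by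
  rw [wt, Finset.prod_list_map_count]
  have hsub : p.edges.toFinset ⊆ G.edgeFinset := fun e he =>
    mem_edgeFinset.mpr (p.edges_subset_edgeSet (List.mem_toFinset.mp he))
  rw [Finset.prod_subset hsub (fun e _ he => by
    rw [List.count_eq_zero_of_not_mem (fun h => he (List.mem_toFinset.mpr h)), pow_zero])]
  rw [show G.edgeFinset = G.edgeSet.toFinset from rfl, ← Finset.prod_set_coe]
  exact Finset.prod_congr rfl fun i _ => by rw [dif_pos i.2]

lemma sum_wt {u v : V} (p : G.Walk u v) :
    ∑ π : G.edgeSet → ℤˣ, wt G π p =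
      if (∀ e ∈ G.edgeFinset, Even (p.edges.count e)) then (2 : ℝ) ^ G.edgeFinset.card else 0 := by
  simp only [wt_eq_prod]
  rw [← Fintype.piFinset_univ, ← Finset.prod_univ_sum (t := fun _ : G.edgeSet => (Finset.univ : Finset ℤˣ))
    (f := fun e s => ((s : ℤ) : ℝ) ^ p.edges.count (e : Sym2 V))]
  have huniv : (Finset.univ : Finset ℤˣ) = {1, -1} := by decide
  have hsum : ∀ m : ℕ, (∑ s : ℤˣ, ((s : ℤ) : ℝ) ^ m) = if Even m then 2 else 0 := by
    intro m
    rw [huniv, Finset.sum_insert (by decide), Finset.sum_singleton]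
    rcases Nat.even_or_odd m with hm | hm
    · rw [if_pos hm]; simp [hm.neg_one_pow]; norm_num
    · rw [if_neg (Nat.not_even_iff_odd.mpr hm)]; simp [hm.neg_one_pow]
  rw [Finset.prod_congr rfl fun e _ => hsum _]
  by_cases hall : ∀ e ∈ G.edgeFinset, Even (p.edges.count e)
  · rw [if_pos hall]
    refine (Finset.prod_congr rfl fun (e : G.edgeSet) _ =>
      if_pos (hall (e : Sym2 V) (mem_edgeFinset.mpr e.2))).trans ?_
    rw [Finset.prod_const, Finset.card_univ, ← Set.toFinset_card]
    congr 2
  · rw [if_neg hall]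
    push_neg at hall
    obtain ⟨e, he, hne⟩ := hall
    exact Finset.prod_eq_zero (Finset.mem_univ (⟨e, mem_edgeFinset.mp he⟩ : G.edgeSet))
      (if_neg hne)

lemma natcard_eq (d : ℕ) (v : V) :
    Nat.card {p : G.Walk v v // p.length = d ∧ ∀ e ∈ G.edgeSet, Even (p.edges.count e)}
      = ((G.finsetWalkLength d v v).filter
          (fun p => ∀ e ∈ G.edgeFinset, Even (p.edges.count e))).card := by
  rw [Nat.card_congr (Equiv.subtypeEquivRight (q := fun p => p ∈ (G.finsetWalkLength d v v).filter
      (fun p => ∀ e ∈ G.edgeFinset, Even (p.edges.count e))) (fun p => by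
    simp only [Finset.mem_filter, SimpleGraph.mem_finsetWalkLength_iff, mem_edgeFinset]))]
  rw [Nat.card_eq_fintype_card, Fintype.card_coe]

end aux

theorem parityClosedWalkCount_eq_mean_spectral_moments
    {V : Type*} [Fintype V] [DecidableEq V] (G : SimpleGraph V) [DecidableRel G.Adj]
    (d : ℕ) (hd : 0 < d) :
    (2 : ℝ) ^ G.edgeFinset.card * (parityClosedWalkCount G d : ℝ) =
      ∑ π : G.edgeSet → ℤˣ, Matrix.trace ((signedAdj G π) ^ d) := by
  simp only [Matrix.trace, Matrix.diag, signedAdj_pow_apply]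
  rw [Finset.sum_comm]
  symm
  calc ∑ v : V, ∑ π : G.edgeSet → ℤˣ, ∑ p ∈ G.finsetWalkLength d v v, wt G π p
      = ∑ v : V, ∑ p ∈ G.finsetWalkLength d v v, ∑ π : G.edgeSet → ℤˣ, wt G π p := by
        exact Finset.sum_congr rfl fun v _ => Finset.sum_comm
    _ = ∑ v : V, ∑ p ∈ G.finsetWalkLength d v v,
          if (∀ e ∈ G.edgeFinset, Even (p.edges.count e)) then (2:ℝ) ^ G.edgeFinset.card else 0 := by
        exact Finset.sum_congr rfl fun v _ => Finset.sum_congr rfl fun p _ => sum_wt G p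
    _ = ∑ v : V, ((G.finsetWalkLength d v v).filter
          (fun p => ∀ e ∈ G.edgeFinset, Even (p.edges.count e))).card • (2:ℝ) ^ G.edgeFinset.card := by
        exact Finset.sum_congr rfl fun v _ => by rw [← Finset.sum_filter, Finset.sum_const]
    _ = (2:ℝ) ^ G.edgeFinset.card * (parityClosedWalkCount G d : ℝ) := by
        simp only [nsmul_eq_mul, parityClosedWalkCount, natcard_eq, Nat.cast_sum,
          Finset.mul_sum]
        exact Finset.sum_congr rfl fun v _ => mul_comm _ _
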